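/- Let q₁ and q₂ be PIBQFs with discriminants D₁ and D₂. Then the quotient set {(q₁′,q₂′) : q₁ ∼ q₁′, q₂ ∼ q₂′, B_Δ(q₁′,q₂′)² < D₁D₂}/∼₂ is finite. -/
import Mathlib


/-- A binary quadratic form `[A,B,C]`, encoded as a triple of integers. -/
abbrev BQF := ℤ × ℤ × ℤ

/-- The discriminant `B² - 4AC` of a binary quadratic form `[A,B,C]`. -/
def disc (q : BQF) : ℤ := q.2.1 ^ 2 - 4 * q.1 * q.2.2

/-- A binary quadratic form is primitive if `gcd(A,B,C) = 1`. -/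
def IsPrimitiveBQF (q : BQF) : Prop := Int.gcd q.1 (Int.gcd q.2.1 q.2.2) = 1

/-- A primitive indefinite binary quadratic form: primitive, of positive
nonsquare discriminant. -/
def IsPIBQF (q : BQF) : Prop := IsPrimitiveBQF q ∧ 0 < disc q ∧ ¬ IsSquare (disc q)

abbrev SL2Z := Matrix.SpecialLinearGroup (Fin 2) ℤ

/-- The action of `SL(2,ℤ)` on binary quadratic forms:
`(γ ∘ q)(x,y) = q(ax + by, cx + dy)`. -/
def actForm (γ : SL2Z) (q : BQF) : BQF :=
  ((q.1 * (γ.1 0 0)^2 + q.2.1 * (γ.1 0 0) * (γ.1 1 0) + q.2.2 * (γ.1 1 0)^2),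
   (2 * q.1 * (γ.1 0 0) * (γ.1 0 1) + q.2.1 * ((γ.1 0 0) * (γ.1 1 1) + (γ.1 0 1) * (γ.1 1 0))
      + 2 * q.2.2 * (γ.1 1 0) * (γ.1 1 1)),
   (q.1 * (γ.1 0 1)^2 + q.2.1 * (γ.1 0 1) * (γ.1 1 1) + q.2.2 * (γ.1 1 1)^2))

/-- Equivalence of binary quadratic forms under `SL(2,ℤ)`. -/
def equivF (q q' : BQF) : Prop := ∃ γ : SL2Z, actForm γ q = q'

/-- `B_Δ(q₁,q₂) = B₁B₂ - 2A₁C₂ - 2A₂C₁`. -/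
def BΔ (q₁ q₂ : BQF) : ℤ := q₁.2.1 * q₂.2.1 - 2 * q₁.1 * q₂.2.2 - 2 * q₂.1 * q₁.2.2

/-- A fundamental discriminant. -/
def IsFundamentalDisc (D : ℤ) : Prop :=
  (D % 4 = 1 ∧ Squarefree D) ∨
    (∃ m : ℤ, D = 4 * m ∧ Squarefree m ∧ (m % 4 = 2 ∨ m % 4 = 3))

/-- The Kronecker symbol `(a / p)` for a prime `p`. -/
def kron (a : ℤ) (p : ℕ) : ℤ :=
  if p = 2 then (if a % 2 = 0 then 0 else if a % 8 = 1 ∨ a % 8 = 7 then 1 else -1)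
  else jacobiSym a p

/-- `ε(p)`: the nonzero value among the Kronecker symbols `(D₁/p)`, `(D₂/p)`. -/
def epsP (D₁ D₂ : ℤ) (p : ℕ) : ℤ := if kron D₁ p = 0 then kron D₂ p else kron D₁ p

/-- The multiplicative extension of `ε` to positive integers. -/
def epsMul (D₁ D₂ : ℤ) (d : ℕ) : ℤ :=
  d.factorization.prod fun p k => (epsP D₁ D₂ p) ^ k

/-- Pairs of primitive forms of discriminants `D₁, D₂` with `B_Δ = n`. -/
def PairSet (D₁ D₂ n : ℤ) : Type :=
  {p : BQF × BQF // IsPrimitiveBQF p.1 ∧ IsPrimitiveBQF p.2 ∧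
    disc p.1 = D₁ ∧ disc p.2 = D₂ ∧ BΔ p.1 p.2 = n}

/-- Simultaneous `SL(2,ℤ)`-equivalence of pairs. -/
def pairRel (D₁ D₂ n : ℤ) (x y : PairSet D₁ D₂ n) : Prop :=
  ∃ γ : SL2Z, actForm γ x.1.1 = y.1.1 ∧ actForm γ x.1.2 = y.1.2

/-- `p(n)`: the number of simultaneous equivalence classes of pairs of primitive
forms of discriminants `D₁, D₂` with `B_Δ = n`. -/
noncomputable def pCount (D₁ D₂ n : ℤ) : ℕ := Nat.card (Quot (pairRel D₁ D₂ n))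

/-- The root geodesic of an indefinite form, as a subset of the upper half plane. -/
def rootGeodesic (q : BQF) : Set ℂ :=
  {z : ℂ | 0 < z.im ∧
    (q.1 : ℝ) * Complex.normSq z + (q.2.1 : ℝ) * z.re + (q.2.2 : ℝ) = 0}

/-- The first root `(-B + √D)/(2A)` of a PIBQF. -/
noncomputable def firstRoot (q : BQF) : ℝ :=
  (-(q.2.1 : ℝ) + Real.sqrt (disc q)) / (2 * q.1)

/-- The second root `(-B - √D)/(2A)` of a PIBQF. -/
noncomputable def secondRoot (q : BQF) : ℝ :=
  (-(q.2.1 : ℝ) - Real.sqrt (disc q)) / (2 * q.1)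


/-- Pairs `(q₁',q₂')` with `qᵢ ∼ qᵢ'` whose root geodesics intersect, i.e.
`B_Δ(q₁',q₂')² < D₁D₂`. -/
def IntPairSet (q₁ q₂ : BQF) : Type :=
  {p : BQF × BQF // equivF q₁ p.1 ∧ equivF q₂ p.2 ∧
    (BΔ p.1 p.2) ^ 2 < disc q₁ * disc q₂}

/-- Simultaneous `SL(2,ℤ)`-equivalence of such pairs. -/
def intPairRel (q₁ q₂ : BQF) (x y : IntPairSet q₁ q₂) : Prop :=
  ∃ γ : SL2Z, actForm γ x.1.1 = y.1.1 ∧ actForm γ x.1.2 = y.1.2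

/-- The unweighted intersection number `Int(q₁,q₂)` (via Proposition 1 of the
paper, used here as the definition). -/
noncomputable def IntNum (q₁ q₂ : BQF) : ℕ :=
  Nat.card (Quot (intPairRel q₁ q₂))


/-! ### Auxiliary lemmas for the proof -/

lemma sl2_det' (γ : SL2Z) : γ.1 0 0 * γ.1 1 1 - γ.1 0 1 * γ.1 1 0 = 1 := by
  have h := γ.2
  rw [Matrix.det_fin_two] at h
  exact h

lemma disc_act (γ : SL2Z) (q : BQF) : disc (actForm γ q) = disc q := by
  have h := sl2_det' γ
  unfold disc actForm
  linear_combination ((q.2.1^2 - 4*q.1*q.2.2) *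
    (γ.1 0 0 * γ.1 1 1 - γ.1 0 1 * γ.1 1 0 + 1)) * h

lemma BΔ_act (γ : SL2Z) (p q : BQF) : BΔ (actForm γ p) (actForm γ q) = BΔ p q := by
  have h := sl2_det' γ
  unfold BΔ actForm
  linear_combination ((p.2.1*q.2.1 - 2*p.1*q.2.2 - 2*q.1*p.2.2) *
    (γ.1 0 0 * γ.1 1 1 - γ.1 0 1 * γ.1 1 0 + 1)) * h

lemma act_comp (γ δ : SL2Z) (q : BQF) : actForm δ (actForm γ q) = actForm (γ * δ) q := by
  unfold actForm
  simp only [Matrix.SpecialLinearGroup.coe_mul, Matrix.mul_apply, Fin.sum_univ_two]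
  refine Prod.ext ?_ (Prod.ext ?_ ?_) <;> ring

/-- The integral vector orthogonal (w.r.t. the bilinear form `BΔ`) to `p` and `q`. -/
def wform (p q : BQF) : BQF :=
  (q.1*p.2.1 - p.1*q.2.1, 2*(p.2.2*q.1 - p.1*q.2.2), p.2.2*q.2.1 - q.2.2*p.2.1)

lemma BΔ_wform_left (p q : BQF) : BΔ (wform p q) p = 0 := by unfold BΔ wform; ring
lemma BΔ_wform_right (p q : BQF) : BΔ (wform p q) q = 0 := by unfold BΔ wform; ring
lemma disc_wform (p q : BQF) : disc (wform p q) = BΔ p q ^ 2 - disc p * disc q := by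
  unfold disc wform BΔ; ring

def neg3 (q : BQF) : BQF := (-q.1, -q.2.1, -q.2.2)
lemma act_neg3 (γ : SL2Z) (q : BQF) : actForm γ (neg3 q) = neg3 (actForm γ q) := by
  unfold actForm neg3; refine Prod.ext ?_ (Prod.ext ?_ ?_) <;> ring
lemma disc_neg3 (q : BQF) : disc (neg3 q) = disc q := by unfold disc neg3; ring
lemma BΔ_neg3 (p q : BQF) : BΔ (neg3 p) q = -(BΔ p q) := by unfold BΔ neg3; ring

def matT (t : ℤ) : SL2Z := ⟨!![1, t; 0, 1], by simp [Matrix.det_fin_two_of]⟩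
def matS : SL2Z := ⟨!![0, -1; 1, 0], by simp [Matrix.det_fin_two_of]⟩

lemma actT (t : ℤ) (w : BQF) :
    actForm (matT t) w = (w.1, 2*w.1*t + w.2.1, w.1*t^2 + w.2.1*t + w.2.2) := by
  unfold actForm matT
  simp [Matrix.cons_val_zero, Matrix.cons_val_one, Matrix.head_cons]

lemma actS (w : BQF) : actForm matS w = (w.2.2, -w.2.1, w.1) := by
  unfold actForm matS
  simp [Matrix.cons_val_zero, Matrix.cons_val_one, Matrix.head_cons]

/-- Reduction of positive definite binary forms: every definite form with positive
leading coefficient is `SL(2,ℤ)`-equivalent to a reduced one. -/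
lemma reduce_posdef : ∀ n : ℕ, ∀ w : BQF, w.1.toNat ≤ n → 0 < w.1 → disc w < 0 →
    ∃ γ : SL2Z, 0 < (actForm γ w).1 ∧ (actForm γ w).2.1 ^ 2 ≤ (actForm γ w).1 ^ 2 ∧
      (actForm γ w).1 ≤ (actForm γ w).2.2 := by
  intro n
  induction n with
  | zero => intro w hn ha _; omega
  | succ n ih =>
    intro w hn ha hd
    obtain ⟨a, b, c⟩ := w
    simp only at ha hn ⊢
    set t : ℤ := -((b + a) / (2 * a)) with ht
    have hact := actT t (a, b, c)
    set b' : ℤ := 2*a*t + b with hb'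
    set c' : ℤ := a*t^2 + b*t + c with hc'
    have hmod : b' = (b + a) % (2 * a) - a := by
      rw [hb', ht, Int.emod_def]; ring
    have h2a : (0:ℤ) < 2 * a := by omega
    have hb'lb : -a ≤ b' := by
      have := Int.emod_nonneg (b + a) (by omega : (2*a) ≠ 0); omega
    have hb'ub : b' < a := by
      have := Int.emod_lt_of_pos (b + a) h2a; omega
    have hb'sq : b' ^ 2 ≤ a ^ 2 := by nlinarith
    have hd0 : b ^ 2 - 4 * a * c < 0 := hd
    have hd' : b' ^ 2 - 4 * a * c' < 0 := by
      have heq : b' ^ 2 - 4 * a * c' = b ^ 2 - 4 * a * c := by rw [hb', hc']; ring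
      omega
    have hc'pos : 0 < c' := by nlinarith [sq_nonneg b']
    by_cases hle : a ≤ c'
    · exact ⟨matT t, by rw [hact]; exact ⟨ha, hb'sq, hle⟩⟩
    · have hlt : c' < a := lt_of_not_ge hle
      have hc'n : c'.toNat ≤ n := by omega
      obtain ⟨δ, hδ⟩ := ih (c', -b', a) hc'n hc'pos
        (by show (-b')^2 - 4*c'*a < 0; nlinarith [hd'])
      refine ⟨matT t * matS * δ, ?_⟩
      have e1 : actForm (matT t * matS * δ) (a, b, c) = actForm δ (c', -b', a) := by
        rw [← act_comp (matT t * matS) δ, ← act_comp (matT t) matS, hact, actS]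
      rw [e1]; exact hδ

lemma boundN (D₁ D₂ Kk : ℤ) (hD₁ : 0 < D₁) (hD₂ : 0 < D₂) (hKpos : 0 < Kk)
    (hKle : Kk ≤ D₁ * D₂) :
    (3 + 2*Kk^2) * D₁ ≤ (3 + 2*(D₁*D₂)^2) * (D₁ + D₂) ∧
    (3 + 2*Kk^2) * D₂ ≤ (3 + 2*(D₁*D₂)^2) * (D₁ + D₂) ∧
    D₁ ≤ (3 + 2*Kk^2) * D₁ ∧ D₂ ≤ (3 + 2*Kk^2) * D₂ ∧
    Kk^2 * D₁ ≤ (3 + 2*Kk^2) * D₁ ∧ Kk^2 * D₂ ≤ (3 + 2*Kk^2) * D₂ := by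
  have hK2 : Kk^2 ≤ (D₁*D₂)^2 := by nlinarith
  exact ⟨by nlinarith, by nlinarith, by nlinarith [sq_nonneg Kk],
    by nlinarith [sq_nonneg Kk], by nlinarith [sq_nonneg Kk], by nlinarith [sq_nonneg Kk]⟩

set_option maxHeartbeats 1000000 in
lemma coord_bound (a b c A B C D Kk : ℤ) (ha : 0 < a) (hac : a ≤ c) (hb : b^2 ≤ a^2)
    (hK : b^2 - 4*a*c = -Kk) (hKpos : 0 < Kk)
    (hD : 0 < D) (hdisc : B^2 - 4*A*C = D) (hortho : b*B - 2*a*C - 2*c*A = 0) :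
    A^2 ≤ D ∧ C^2 ≤ Kk^2*D ∧ B^2 ≤ (3 + 2*Kk^2)*D := by
  have hc : 0 < c := by nlinarith [sq_nonneg b]
  have ha1 : 1 ≤ a^2 := by nlinarith
  have hmain : A^2 ≤ D ∧ C^2 ≤ Kk^2*D := by
    by_cases hb0 : b = 0
    · subst hb0
      have h0 : a*C + c*A = 0 := by linarith [hortho]
      have hCA : (a*C)^2 = (c*A)^2 := by
        have h1 : a*C = -(c*A) := by linarith
        rw [h1]; ring
      have hc2a2 : a^2 ≤ c^2 := by nlinarith
      have hA2C2 : A^2 ≤ C^2 := by nlinarith [hCA, hc2a2, sq_nonneg A, mul_pos ha ha]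
      have h1 : a*(A*C) + c*A^2 = 0 := by linear_combination A * h0
      have hACneg : A*C ≤ 0 := by nlinarith [h1, sq_nonneg A]
      have h4 : A^4 ≤ (A*C)^2 := by nlinarith [hA2C2, sq_nonneg A]
      have h5 : A^2 ≤ -(A*C) := by nlinarith [h4, hACneg, sq_nonneg A, sq_nonneg (A^2 + A*C)]
      have hA : A^2 ≤ D := by nlinarith [h5, hdisc, sq_nonneg B]
      refine ⟨hA, ?_⟩
      have hcK : 4*a*c = Kk := by linarith [hK]
      have hcleK : c ≤ Kk := by nlinarith
      have hc2K : c^2 ≤ Kk^2 := by nlinarith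
      have t1 : C^2 ≤ a^2*C^2 := by nlinarith [ha1, sq_nonneg C]
      have t2 : a^2*C^2 = c^2*A^2 := by linear_combination hCA
      have e1 : c^2*A^2 ≤ c^2*D := by
        have := mul_le_mul_of_nonneg_left hA (sq_nonneg c); linarith
      have e2 : c^2*D ≤ Kk^2*D := by
        have := mul_le_mul_of_nonneg_right hc2K (le_of_lt hD); linarith
      linarith [t1, t2, e1, e2]
    · have hb1 : 1 ≤ b^2 := by
        rcases lt_or_gt_of_ne hb0 with h | h <;> nlinarith
      have identA : (4*a^2*C + (4*a*c - 2*b^2)*A)^2 + 4*b^2*Kk*A^2 = 4*a^2*b^2*D := by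
        linear_combination (4*a^2*b^2) * hdisc - (4*a^2*(b*B + 2*a*C + 2*c*A)) * hortho
          + (4*b^2*A^2) * hK
      have identC : (4*c^2*A + (4*a*c - 2*b^2)*C)^2 + 4*b^2*Kk*C^2 = 4*c^2*b^2*D := by
        linear_combination (4*c^2*b^2) * hdisc - (4*c^2*(b*B + 2*a*C + 2*c*A)) * hortho
          + (4*b^2*C^2) * hK
      have h6 : (4*b^2)*(Kk*A^2) ≤ (4*b^2)*(a^2*D) := by
        nlinarith [identA, sq_nonneg (4*a^2*C + (4*a*c - 2*b^2)*A)]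
      have hKA : Kk*A^2 ≤ a^2*D := le_of_mul_le_mul_left h6 (by positivity)
      have h6' : (4*b^2)*(Kk*C^2) ≤ (4*b^2)*(c^2*D) := by
        nlinarith [identC, sq_nonneg (4*c^2*A + (4*a*c - 2*b^2)*C)]
      have hKC : Kk*C^2 ≤ c^2*D := le_of_mul_le_mul_left h6' (by positivity)
      have h3a : 3*a^2 ≤ Kk := by nlinarith
      have h3c : 3*c ≤ Kk := by nlinarith
      constructor
      · have h7 : 3*a^2*A^2 ≤ Kk*A^2 := by nlinarith [h3a, sq_nonneg A]
        have h8 : (a^2)*(3*A^2) ≤ (a^2)*D := by linarith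
        have h9 : 3*A^2 ≤ D := le_of_mul_le_mul_left h8 (by positivity)
        nlinarith [h9, sq_nonneg A]
      · have h7 : 3*c*C^2 ≤ Kk*C^2 := by nlinarith [h3c, sq_nonneg C]
        have h8 : c*(3*C^2) ≤ c*(c*D) := by nlinarith [h7, hKC]
        have h9 : 3*C^2 ≤ c*D := le_of_mul_le_mul_left h8 hc
        have h10 : c*D ≤ Kk*D := by nlinarith [h3c, hD, hc]
        have h11 : Kk*D ≤ Kk^2*D := by nlinarith [hKpos, hD]
        nlinarith [h9, h10, h11, sq_nonneg C]
  obtain ⟨hA, hC⟩ := hmain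
  refine ⟨hA, hC, ?_⟩
  linarith [hA, hC, hdisc, sq_nonneg (A - C)]

/-- finiteness of the intersection number; Proposition 1 of
the paper. The set of simultaneous equivalence classes of intersecting pairs
is finite. -/
theorem intPair_quotient_finite
    (q₁ q₂ : BQF) (h₁ : IsPIBQF q₁) (h₂ : IsPIBQF q₂) :
    Finite (Quot (intPairRel q₁ q₂)) := by
  obtain ⟨-, hD₁, -⟩ := h₁
  obtain ⟨-, hD₂, -⟩ := h₂
  set N : ℤ := (3 + 2*(disc q₁ * disc q₂)^2) * (disc q₁ + disc q₂) with hN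
  -- the finite box
  set Sset : Set (BQF × BQF) := {p | p.1.1^2 ≤ N ∧ p.1.2.1^2 ≤ N ∧ p.1.2.2^2 ≤ N ∧
    p.2.1^2 ≤ N ∧ p.2.2.1^2 ≤ N ∧ p.2.2.2^2 ≤ N} with hSset
  have hI : {z : ℤ | z^2 ≤ N}.Finite := by
    refine Set.Finite.subset (Set.finite_Icc (-N) N) ?_
    intro z hz
    simp only [Set.mem_setOf_eq] at hz
    simp only [Set.mem_Icc]
    constructor <;> nlinarith [hz]
  have hSfin : Sset.Finite := by
    refine Set.Finite.subset (((hI.prod (hI.prod hI)).prod (hI.prod (hI.prod hI)))) ?_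
    rintro ⟨⟨a1,b1,c1⟩,⟨a2,b2,c2⟩⟩ hp
    obtain ⟨h1,h2,h3,h4,h5,h6⟩ := hp
    exact ⟨⟨h1, h2, h3⟩, ⟨h4, h5, h6⟩⟩
  haveI : Finite ↥Sset := hSfin.to_subtype
  haveI : Finite {x : IntPairSet q₁ q₂ // x.1 ∈ Sset} := by
    refine Finite.of_injective (fun x => (⟨x.1.1, x.2⟩ : ↥Sset)) ?_
    intro x y h
    simp only [Subtype.mk.injEq] at h
    exact Subtype.ext (Subtype.ext h)
  refine Finite.of_surjective
    (fun x : {x : IntPairSet q₁ q₂ // x.1 ∈ Sset} => Quot.mk (intPairRel q₁ q₂) x.1) ?_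
  intro cl
  obtain ⟨⟨⟨p₁, p₂⟩, he₁, he₂, hB⟩, rfl⟩ := Quot.exists_rep cl
  have hB' : BΔ p₁ p₂ ^ 2 < disc q₁ * disc q₂ := hB
  have he₁' : equivF q₁ p₁ := he₁
  have he₂' : equivF q₂ p₂ := he₂
  have hd1 : disc p₁ = disc q₁ := by
    obtain ⟨γ, hγ⟩ := he₁'; rw [← hγ, disc_act]
  have hd2 : disc p₂ = disc q₂ := by
    obtain ⟨γ, hγ⟩ := he₂'; rw [← hγ, disc_act]
  set Kk : ℤ := disc q₁ * disc q₂ - BΔ p₁ p₂ ^ 2 with hKk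
  have hKpos : 0 < Kk := by linarith [hB']
  -- the orthogonal definite form, with positive leading coefficient
  obtain ⟨w₁, hw₁pos, hw₁disc, hw₁o₁, hw₁o₂⟩ :
      ∃ w₁ : BQF, 0 < w₁.1 ∧ disc w₁ = -Kk ∧ BΔ w₁ p₁ = 0 ∧ BΔ w₁ p₂ = 0 := by
    have hwd : disc (wform p₁ p₂) = -Kk := by
      rw [disc_wform, hd1, hd2]; ring
    have hwne : (wform p₁ p₂).1 ≠ 0 := by
      intro h0
      have : disc (wform p₁ p₂) = (wform p₁ p₂).2.1^2 - 4*(wform p₁ p₂).1*(wform p₁ p₂).2.2 :=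
        rfl
      rw [h0] at this
      nlinarith [sq_nonneg (wform p₁ p₂).2.1, hwd, this]
    rcases lt_or_gt_of_ne hwne with hneg | hpos
    · refine ⟨neg3 (wform p₁ p₂), ?_, ?_, ?_, ?_⟩
      · show 0 < -(wform p₁ p₂).1; linarith
      · rw [disc_neg3]; exact hwd
      · rw [BΔ_neg3, BΔ_wform_left]; ring
      · rw [BΔ_neg3, BΔ_wform_right]; ring
    · exact ⟨wform p₁ p₂, hpos, hwd, BΔ_wform_left _ _, BΔ_wform_right _ _⟩
  obtain ⟨γ, hr1, hr2, hr3⟩ := reduce_posdef w₁.1.toNat w₁ le_rfl hw₁pos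
    (by rw [hw₁disc]; linarith)
  set w' : BQF := actForm γ w₁ with hw'
  set p₁' : BQF := actForm γ p₁ with hp₁'
  set p₂' : BQF := actForm γ p₂ with hp₂'
  have hw'disc : w'.2.1^2 - 4*w'.1*w'.2.2 = -Kk := by
    have := disc_act γ w₁
    rw [hw₁disc] at this
    exact this
  have hbd1 : p₁'.1^2 ≤ disc q₁ ∧ p₁'.2.2^2 ≤ Kk^2 * disc q₁ ∧
      p₁'.2.1^2 ≤ (3 + 2*Kk^2) * disc q₁ := by
    refine coord_bound w'.1 w'.2.1 w'.2.2 p₁'.1 p₁'.2.1 p₁'.2.2 (disc q₁) Kk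
      hr1 hr3 hr2 hw'disc hKpos hD₁ ?_ ?_
    · have := (disc_act γ p₁).trans hd1
      exact this
    · have h := BΔ_act γ w₁ p₁
      rw [hw₁o₁] at h
      unfold BΔ at h
      linarith [h]
  have hbd2 : p₂'.1^2 ≤ disc q₂ ∧ p₂'.2.2^2 ≤ Kk^2 * disc q₂ ∧
      p₂'.2.1^2 ≤ (3 + 2*Kk^2) * disc q₂ := by
    refine coord_bound w'.1 w'.2.1 w'.2.2 p₂'.1 p₂'.2.1 p₂'.2.2 (disc q₂) Kk
      hr1 hr3 hr2 hw'disc hKpos hD₂ ?_ ?_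
    · have := (disc_act γ p₂).trans hd2
      exact this
    · have h := BΔ_act γ w₁ p₂
      rw [hw₁o₂] at h
      unfold BΔ at h
      linarith [h]
  -- the bounded representative lies in the box
  have hKle : Kk ≤ disc q₁ * disc q₂ := by linarith [sq_nonneg (BΔ p₁ p₂)]
  obtain ⟨hbig1, hbig2, hsmall1, hsmall2, hmid1, hmid2⟩ :=
    boundN (disc q₁) (disc q₂) Kk hD₁ hD₂ hKpos hKle
  have ht : equivF q₁ p₁' ∧ equivF q₂ p₂' := by
    constructor
    · obtain ⟨δ, hδ⟩ := he₁
      exact ⟨δ * γ, by rw [← act_comp, hδ]⟩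
    · obtain ⟨δ, hδ⟩ := he₂
      exact ⟨δ * γ, by rw [← act_comp, hδ]⟩
  have hBΔ' : BΔ p₁' p₂' = BΔ p₁ p₂ := BΔ_act γ p₁ p₂
  refine ⟨⟨⟨(p₁', p₂'), ht.1, ht.2, by
    show BΔ p₁' p₂' ^ 2 < disc q₁ * disc q₂
    rw [hBΔ']; exact hB'⟩, ?_⟩, ?_⟩
  · show p₁'.1^2 ≤ N ∧ p₁'.2.1^2 ≤ N ∧ p₁'.2.2^2 ≤ N ∧
      p₂'.1^2 ≤ N ∧ p₂'.2.1^2 ≤ N ∧ p₂'.2.2^2 ≤ N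
    obtain ⟨b11, b12, b13⟩ := hbd1
    obtain ⟨b21, b22, b23⟩ := hbd2
    exact ⟨by linarith, by linarith, by linarith, by linarith, by linarith, by linarith⟩
  · exact (Quot.sound ⟨γ, rfl, rfl⟩).symm
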